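/- arXiv:2209.09116 — 2 statements merged into one kernel-verified Lean document; each statement's English description precedes it below -/
import Mathlib

section
/- Soundness of the MILP model for the TOP: suppose every component size satisfies s c ≥ 1. Let x : C → Fin T → ℕ, y : Fin T → ℕ, and z : P → Fin T → ℕ all take only the values 0 and 1, and suppose they satisfy: (i) ∑_{t} x c t = 1 for every component c; (ii) ∑_{c} (x c t) · (s c) ≤ (y t) · N for every trolley t; (iii) ∑_{t} z p t ≤ l_p for every PCB p; and (iv) for every p and t, z p t = 1 if and only if there exists c ∈ S_p with x c t = 1. Then the function f : C → Fin T assigning to each component c the unique trolley t with x c t = 1 is a capacity-feasible loading that respects the PCB limits, and the number of distinct trolleys in the range of f is at most ∑_{t} y t. -/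
/-- The load of trolley `t` under loading `f` with component sizes `s`. -/
def trolleyLoad {C : Type*} [Fintype C] {k : ℕ} (s : C → ℕ) (f : C → Fin k)
    (t : Fin k) : ℕ :=
  ∑ c ∈ Finset.univ.filter (fun c => f c = t), s c

/-- Generic helper: if a finset is contained in the 1-set of a 0/1 function,
its cardinality is at most the total sum of that function. -/
lemma card_le_sum_of_subset_ones {α : Type*} [Fintype α] [DecidableEq α]
    (g : α → ℕ) (F : Finset α) (h : ∀ a ∈ F, g a = 1) :
    F.card ≤ ∑ a, g a := by
  have e1 : ∑ a ∈ F, g a = F.card := by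
    rw [Finset.sum_congr rfl h]; simp
  calc F.card = ∑ a ∈ F, g a := e1.symm
    _ ≤ ∑ a, g a := Finset.sum_le_sum_of_subset (Finset.subset_univ F)

/-- soundness of the MILP model for the TOP. If 0/1-valued
`x, y, z` satisfy constraints (i)–(iv) and every component size is at least 1,
then the function `f` picking for each component `c` the (unique) trolley `t`
with `x c t = 1` is a capacity-feasible loading respecting the PCB limits,
and the number of distinct trolleys used by `f` is at most `∑ t, y t`. -/
theorem milp_sound
    {C P : Type*} [Fintype C] [Fintype P] [DecidableEq C]
    (s : C → ℕ) (hs : ∀ c, 1 ≤ s c) (N T : ℕ) (S : P → Finset C) (l : P → ℕ)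
    (x : C → Fin T → ℕ) (y : Fin T → ℕ) (z : P → Fin T → ℕ)
    (hx : ∀ c t, x c t = 0 ∨ x c t = 1)
    (hy : ∀ t, y t = 0 ∨ y t = 1)
    (hz : ∀ p t, z p t = 0 ∨ z p t = 1)
    (h1 : ∀ c, ∑ t, x c t = 1)
    (h2 : ∀ t, ∑ c, x c t * s c ≤ y t * N)
    (h3 : ∀ p, ∑ t, z p t ≤ l p)
    (h4 : ∀ p t, z p t = 1 ↔ ∃ c ∈ S p, x c t = 1)
    (f : C → Fin T) (hf : ∀ c, x c (f c) = 1) :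
    (∀ t, trolleyLoad s f t ≤ N) ∧
      (∀ p, ((S p).image f).card ≤ l p) ∧
      (Finset.univ.image f).card ≤ ∑ t, y t := by
  have hzero : ∀ c t, f c ≠ t → x c t = 0 := by
    intro c t hne
    have hsum := h1 c
    rw [← Finset.add_sum_erase _ _ (Finset.mem_univ (f c)), hf c] at hsum
    have h0 : ∑ t' ∈ Finset.univ.erase (f c), x c t' = 0 := by omega
    exact (Finset.sum_eq_zero_iff.mp h0) t
      (Finset.mem_erase.mpr ⟨fun h => hne h.symm, Finset.mem_univ t⟩)
  have loadeq : ∀ t, trolleyLoad s f t = ∑ c, x c t * s c := by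
    intro t
    rw [trolleyLoad, Finset.sum_filter]
    apply Finset.sum_congr rfl
    intro c _
    by_cases h : f c = t
    · rw [if_pos h, ← h, hf c, one_mul]
    · rw [if_neg h, hzero c t h, zero_mul]
  refine ⟨?_, ?_, ?_⟩
  · intro t
    have h2t := h2 t
    have hN : y t * N ≤ N := by rcases hy t with h | h <;> simp [h]
    calc trolleyLoad s f t = ∑ c, x c t * s c := loadeq t
      _ ≤ y t * N := h2t
      _ ≤ N := hN
  · intro p
    refine le_trans (card_le_sum_of_subset_ones (z p) _ ?_) (h3 p)
    intro t ht
    obtain ⟨c, hc, rfl⟩ := Finset.mem_image.mp ht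
    exact (h4 p _).mpr ⟨c, hc, hf c⟩
  · refine card_le_sum_of_subset_ones y _ ?_
    intro t ht
    obtain ⟨c, _, rfl⟩ := Finset.mem_image.mp ht
    rcases hy (f c) with h | h
    · exfalso
      have h2t := h2 (f c)
      rw [h, zero_mul] at h2t
      have hle : x c (f c) * s c ≤ ∑ c', x c' (f c) * s c' :=
        Finset.single_le_sum (f := fun c' => x c' (f c) * s c') (fun _ _ => Nat.zero_le _) (Finset.mem_univ c)
      rw [hf c, one_mul] at hle
      have := hs c
      omega
    · exact h
end

section
/- Equivalence of the MILP model and the TOP: suppose every component size satisfies s c ≥ 1 and fix k : ℕ. There exist 0/1-valued x : C → Fin T → ℕ, y : Fin T → ℕ, z : P → Fin T → ℕ satisfying constraints (i)–(iv) of the MILP model with ∑_{t} y t ≤ k if and only if there exists a capacity-feasible loading f : C → Fin T respecting the PCB limits whose range contains at most k distinct trolleys. -/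
/-- equivalence of the MILP model and the TOP: assuming every
component size is at least 1, there exist 0/1-valued `x, y, z` satisfying
constraints (i)–(iv) with `∑ t, y t ≤ k` iff there exists a capacity-feasible
loading `f : C → Fin T` respecting the PCB limits using at most `k` distinct
trolleys. -/
theorem milp_iff_top
    {C P : Type*} [Fintype C] [Fintype P] [DecidableEq C]
    (s : C → ℕ) (hs : ∀ c, 1 ≤ s c) (N T : ℕ) (S : P → Finset C) (l : P → ℕ)
    (k : ℕ) :
    (∃ (x : C → Fin T → ℕ) (y : Fin T → ℕ) (z : P → Fin T → ℕ),
        (∀ c t, x c t = 0 ∨ x c t = 1) ∧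
        (∀ t, y t = 0 ∨ y t = 1) ∧
        (∀ p t, z p t = 0 ∨ z p t = 1) ∧
        (∀ c, ∑ t, x c t = 1) ∧
        (∀ t, ∑ c, x c t * s c ≤ y t * N) ∧
        (∀ p, ∑ t, z p t ≤ l p) ∧
        (∀ p t, z p t = 1 ↔ ∃ c ∈ S p, x c t = 1) ∧
        (∑ t, y t) ≤ k) ↔
      (∃ f : C → Fin T,
        (∀ t, trolleyLoad s f t ≤ N) ∧
        (∀ p, ((S p).image f).card ≤ l p) ∧
        (Finset.univ.image f).card ≤ k) := by
  constructor
  · rintro ⟨x, y, z, hx01, hy01, hz01, hsum1, hcap, hlim, hziff, hyk⟩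
    -- define f
    have hex : ∀ c, ∃ t, x c t = 1 := by
      intro c
      by_contra h
      push_neg at h
      have : ∀ t ∈ Finset.univ, x c t = 0 := by
        intro t _
        rcases hx01 c t with h0 | h1
        · exact h0
        · exact absurd h1 (h t)
      have := Finset.sum_eq_zero this
      rw [hsum1 c] at this
      exact one_ne_zero this
    choose f hf using hex
    -- uniqueness: x c t = 1 → f c = t
    have huniq : ∀ c t, x c t = 1 → f c = t := by
      intro c t h1
      by_contra hne
      have hpair : ({f c, t} : Finset (Fin T)).sum (x c) = 2 := by
        rw [Finset.sum_pair hne, hf c, h1]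
      have hle : ({f c, t} : Finset (Fin T)).sum (x c) ≤ ∑ t, x c t :=
        Finset.sum_le_sum_of_subset (Finset.subset_univ _)
      rw [hsum1 c, hpair] at hle
      omega
    have hxft : ∀ c t, x c t = 1 ↔ f c = t := by
      intro c t
      constructor
      · exact huniq c t
      · rintro rfl; exact hf c
    refine ⟨f, ?_, ?_, ?_⟩
    · intro t
      have h1 : trolleyLoad s f t ≤ ∑ c, x c t * s c := by
        rw [trolleyLoad]
        calc ∑ c ∈ Finset.univ.filter (fun c => f c = t), s c
            = ∑ c ∈ Finset.univ.filter (fun c => f c = t), x c t * s c := by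
              apply Finset.sum_congr rfl
              intro c hc
              rw [Finset.mem_filter] at hc
              rw [(hxft c t).mpr hc.2, one_mul]
          _ ≤ ∑ c, x c t * s c :=
              Finset.sum_le_sum_of_subset (Finset.subset_univ _)
      have h2 : y t * N ≤ N := by
        rcases hy01 t with h | h <;> simp [h]
      exact le_trans h1 (le_trans (hcap t) h2)
    · intro p
      have : ((S p).image f).card = ∑ t ∈ (S p).image f, z p t := by
        rw [Finset.card_eq_sum_ones]
        apply Finset.sum_congr rfl
        intro t ht
        rw [Finset.mem_image] at ht
        obtain ⟨c, hc, hct⟩ := ht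
        exact ((hziff p t).mpr ⟨c, hc, (hxft c t).mpr hct⟩).symm
      rw [this]
      exact le_trans (Finset.sum_le_sum_of_subset (Finset.subset_univ _)) (hlim p)
    · have : (Finset.univ.image f).card = ∑ t ∈ Finset.univ.image f, y t := by
        rw [Finset.card_eq_sum_ones]
        apply Finset.sum_congr rfl
        intro t ht
        rw [Finset.mem_image] at ht
        obtain ⟨c, _, hct⟩ := ht
        have hx1 : x c t = 1 := (hxft c t).mpr hct
        have : 1 ≤ y t * N := by
          have := hcap t
          have h1 : x c t * s c ≤ ∑ c', x c' t * s c' :=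
            Finset.single_le_sum (f := fun c' => x c' t * s c')
              (fun c' _ => Nat.zero_le _) (Finset.mem_univ c)
          have h2 : 1 ≤ x c t * s c := by rw [hx1, one_mul]; exact hs c
          omega
        rcases hy01 t with h | h
        · rw [h] at this; omega
        · omega
      rw [this]
      exact le_trans (Finset.sum_le_sum_of_subset (Finset.subset_univ _)) hyk
  · rintro ⟨f, hcap, hlim, hk⟩
    refine ⟨fun c t => if f c = t then 1 else 0,
            fun t => if t ∈ Finset.univ.image f then 1 else 0,
            fun p t => if t ∈ (S p).image f then 1 else 0,
            ?_, ?_, ?_, ?_, ?_, ?_, ?_, ?_⟩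
    · intro c t; dsimp only; split <;> simp
    · intro t; dsimp only; split <;> simp
    · intro p t; dsimp only; split <;> simp
    · intro c; simp
    · intro t
      have hsum : ∑ c, (if f c = t then 1 else 0) * s c = trolleyLoad s f t := by
        rw [trolleyLoad, Finset.sum_filter]
        apply Finset.sum_congr rfl
        intro c _
        split <;> simp
      rw [hsum]
      by_cases ht : t ∈ Finset.univ.image f
      · simp only [ht, if_pos, one_mul]
        exact hcap t
      · have : trolleyLoad s f t = 0 := by
          rw [trolleyLoad]
          apply Finset.sum_eq_zero
          intro c hc
          rw [Finset.mem_filter] at hc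
          exact absurd (hc.2 ▸ Finset.mem_image_of_mem f (Finset.mem_univ c)) ht
        rw [this]
        exact Nat.zero_le _
    · intro p
      have : ∑ t, (if t ∈ (S p).image f then 1 else 0) = ((S p).image f).card := by
        rw [Finset.sum_ite_mem, Finset.univ_inter, Finset.card_eq_sum_ones]
      rw [this]
      exact hlim p
    · intro p t
      constructor
      · intro h
        by_cases ht : t ∈ (S p).image f
        · rw [Finset.mem_image] at ht
          obtain ⟨c, hc, hct⟩ := ht
          exact ⟨c, hc, by simp [hct]⟩
        · simp [ht] at h
      · rintro ⟨c, hc, hct⟩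
        have : f c = t := by by_contra h; simp [h] at hct
        have : t ∈ (S p).image f := this ▸ Finset.mem_image_of_mem f hc
        simp [this]
    · have : ∑ t, (if t ∈ Finset.univ.image f then 1 else 0) = (Finset.univ.image f).card := by
        rw [Finset.sum_ite_mem, Finset.univ_inter, Finset.card_eq_sum_ones]
      rw [this]
      exact hk
end
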